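/- Let n ≥ 4 and, for 1 ≤ i ≤ n, let BS_{n−1}^i be the subgraph of the bubble-sort star graph BS_n induced by the permutations whose value in the n-th position equals i. Then any two vertices lying in different copies BS_{n−1}^i and BS_{n−1}^j (i ≠ j) have at most one common outside neighbour. -/

import Mathlib

/-- The Cayley graph of a group with connection set `S`: `x` is adjacent to `x·s` for
`s ∈ S` (symmetrized, loops removed). -/
def cayleyGraph {G : Type*} [Group G] (S : Set G) : SimpleGraph G :=
  SimpleGraph.fromRel (fun x y => ∃ s ∈ S, y = x * s)

/-- The bubble-sort star graph `BS_n`: the Cayley graph of `Sym(n)` (permutations of the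
`n` positions `0, …, n-1`, written as words) with connection set
`{(1 i) : 2 ≤ i ≤ n} ∪ {(i, i+1) : 2 ≤ i ≤ n-1}` (in 1-based notation). -/
def bubbleSortStar (n : ℕ) (hn : 3 ≤ n) : SimpleGraph (Equiv.Perm (Fin n)) :=
  cayleyGraph ({σ | ∃ i : Fin n, 1 ≤ (i : ℕ) ∧ σ = Equiv.swap ⟨0, by omega⟩ i} ∪
    {σ | ∃ j : ℕ, ∃ h : j + 1 < n, 1 ≤ j ∧ σ = Equiv.swap ⟨j, by omega⟩ ⟨j + 1, h⟩})

/-- Key lemma: an outside neighbour of `x` is `x·(0, n-1)` or `x·(n-2, n-1)`. -/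
lemma outside_nbr (n : ℕ) (hn : 4 ≤ n) (x w : Equiv.Perm (Fin n))
    (hadj : (bubbleSortStar n (Nat.le_of_succ_le hn)).Adj x w)
    (hout : w ⟨n - 1, (Nat.sub_lt (Nat.lt_of_lt_of_le (Nat.zero_lt_succ 3) hn) Nat.one_pos)⟩ ≠ x ⟨n - 1, (Nat.sub_lt (Nat.lt_of_lt_of_le (Nat.zero_lt_succ 3) hn) Nat.one_pos)⟩) :
    w = x * Equiv.swap ⟨0, (Nat.lt_of_lt_of_le (Nat.zero_lt_succ 3) hn)⟩ ⟨n - 1, (Nat.sub_lt (Nat.lt_of_lt_of_le (Nat.zero_lt_succ 3) hn) Nat.one_pos)⟩ ∨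
    w = x * Equiv.swap ⟨n - 2, (Nat.sub_lt (Nat.lt_of_lt_of_le (Nat.zero_lt_succ 3) hn) Nat.two_pos)⟩ ⟨n - 1, (Nat.sub_lt (Nat.lt_of_lt_of_le (Nat.zero_lt_succ 3) hn) Nat.one_pos)⟩ := by
  have h3 : 3 ≤ n := by omega
  rw [bubbleSortStar, cayleyGraph, SimpleGraph.fromRel_adj] at hadj
  obtain ⟨hne, h⟩ := hadj
  have hs : ∃ s, (s ∈ ({σ | ∃ i : Fin n, 1 ≤ (i : ℕ) ∧ σ = Equiv.swap ⟨0, by omega⟩ i} ∪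
      {σ | ∃ j : ℕ, ∃ h : j + 1 < n, 1 ≤ j ∧
        σ = Equiv.swap ⟨j, by omega⟩ ⟨j + 1, h⟩} : Set (Equiv.Perm (Fin n)))) ∧ w = x * s := by
    rcases h with ⟨s, hsS, rfl⟩ | ⟨s, hsS, hxw⟩
    · exact ⟨s, hsS, rfl⟩
    · have hinv : s⁻¹ = s := by
        rcases hsS with ⟨i, hi, rfl⟩ | ⟨j, hj, hj1, rfl⟩ <;> exact Equiv.swap_inv _ _
      refine ⟨s, hsS, ?_⟩
      have hss : s * s = 1 := by nth_rewrite 1 [← hinv]; exact inv_mul_cancel s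
      rw [hxw, mul_assoc, hss, mul_one]
  obtain ⟨s, hsS, rfl⟩ := hs
  set p2 : Fin n := ⟨n - 1, by omega⟩ with hp2
  have hsp2 : s p2 ≠ p2 := by
    intro h
    exact hout (by rw [Equiv.Perm.mul_apply, h])
  rcases hsS with ⟨i, hi, rfl⟩ | ⟨j, hj, hj1, rfl⟩
  · left
    have hip2 : i = p2 := by
      by_contra hne'
      exact hsp2 (Equiv.swap_apply_of_ne_of_ne
        (by simp [hp2, Fin.ext_iff]; omega) (fun h => hne' h.symm))
    rw [hip2]
  · right
    have hj2 : j = n - 2 := by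
      by_contra hne'
      apply hsp2
      apply Equiv.swap_apply_of_ne_of_ne <;> simp [hp2, Fin.ext_iff] <;> omega
    have e1 : (⟨j, by omega⟩ : Fin n) = (⟨n - 2, by omega⟩ : Fin n) :=
      Fin.ext (by simp; omega)
    have e2 : (⟨j + 1, hj⟩ : Fin n) = p2 :=
      Fin.ext (by simp [hp2]; omega)
    rw [e1, e2]

/-- for `n ≥ 4`, splitting `BS_n` into copies `BS_{n-1}^i` according to the
value in the `n`-th position, any two vertices lying in different copies have at most one
common outside neighbour. -/
theorem stmt_9 (n : ℕ) (hn : 4 ≤ n)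
    (u v : Equiv.Perm (Fin n))
    (huv : u ⟨n - 1, by omega⟩ ≠ v ⟨n - 1, by omega⟩) :
    {w : Equiv.Perm (Fin n) |
      (bubbleSortStar n (by omega)).Adj u w ∧ w ⟨n - 1, by omega⟩ ≠ u ⟨n - 1, by omega⟩ ∧
      (bubbleSortStar n (by omega)).Adj v w ∧
        w ⟨n - 1, by omega⟩ ≠ v ⟨n - 1, by omega⟩}.ncard ≤ 1 := by
  set p0 : Fin n := ⟨0, by omega⟩ with hp0
  set p1 : Fin n := ⟨n - 2, by omega⟩ with hp1
  set p2 : Fin n := ⟨n - 1, by omega⟩ with hp2d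
  set a := Equiv.swap p0 p2 with ha
  set b := Equiv.swap p1 p2 with hb
  have hp01 : p0 ≠ p1 := by simp [p0, p1, Fin.ext_iff]; omega
  have hp02 : p0 ≠ p2 := by simp [p0, p2, Fin.ext_iff]; omega
  have hp12 : p1 ≠ p2 := by simp [p1, p2, Fin.ext_iff]; omega
  have huvne : u ≠ v := fun h => huv (by rw [h])
  have hab : ¬ (u * a = v * b ∧ u * b = v * a) := by
    rintro ⟨h1, h2⟩
    have hb2 : b * b = 1 := Equiv.swap_mul_self _ _
    have ha2 : a * a = 1 := Equiv.swap_mul_self _ _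
    have e1 : u * (a * b) = v := by rw [← mul_assoc, h1, mul_assoc, hb2, mul_one]
    have e2 : u * (b * a) = v := by rw [← mul_assoc, h2, mul_assoc, ha2, mul_one]
    have e3 : a * b = b * a := mul_left_cancel (e1.trans e2.symm)
    have e4 := congrArg (fun σ : Equiv.Perm (Fin n) => σ p2) e3
    simp only [Equiv.Perm.mul_apply, ha, hb, Equiv.swap_apply_right] at e4
    rw [Equiv.swap_apply_of_ne_of_ne hp01.symm hp12,
      Equiv.swap_apply_of_ne_of_ne hp01 hp02] at e4
    exact hp01 e4.symm
  have hsub : Set.Subsingleton {w : Equiv.Perm (Fin n) |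
      (bubbleSortStar n (by omega)).Adj u w ∧ w ⟨n - 1, by omega⟩ ≠ u ⟨n - 1, by omega⟩ ∧
      (bubbleSortStar n (by omega)).Adj v w ∧
        w ⟨n - 1, by omega⟩ ≠ v ⟨n - 1, by omega⟩} := by
    rintro w1 ⟨h1u, h1uo, h1v, h1vo⟩ w2 ⟨h2u, h2uo, h2v, h2vo⟩
    have k1u : w1 = u * a ∨ w1 = u * b := outside_nbr n hn u w1 h1u h1uo
    have k1v : w1 = v * a ∨ w1 = v * b := outside_nbr n hn v w1 h1v h1vo
    have k2u : w2 = u * a ∨ w2 = u * b := outside_nbr n hn u w2 h2u h2uo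
    have k2v : w2 = v * a ∨ w2 = v * b := outside_nbr n hn v w2 h2v h2vo
    rcases k1u with rfl | rfl <;> rcases k2u with rfl | rfl <;>
      rcases k1v with h1 | h1 <;> rcases k2v with h2 | h2 <;>
      first
        | rfl
        | exact h1.trans h2.symm
        | exact absurd (mul_right_cancel h1) huvne
        | exact absurd (And.intro h1 h2) hab
        | exact absurd (And.intro h2 h1) hab
  rcases hsub.eq_empty_or_singleton with h | ⟨x, h⟩ <;> simp [h] <;> exact hsub
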